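/- Suppose φ(u) = β for all u ≥ T* (constant tail), and the infection-duration density among infected eligible subjects is constant on [0,T*] with value f(0) = λ(t)(1−p(t))/p(t). Then the test-recent probability satisfies P_rec(t) = (Ω − β·T*)·λ(t)·(1−p(t)) + p(t)·β, where Ω = ∫₀^{T*} φ(u)du is the mean duration of recent infection (MDRI). -/

import Mathlib

open MeasureTheory Set

/-- Adjusted-estimator identity: constant tail φ(u)=β for u ≥ T*, uniform duration density
on [0,T*] with value λ(1-p)/p, total mass 1, then P_rec = (Ω-βT*)λ(1-p) + pβ. -/
theorem adjusted_identity (φ f : ℝ → ℝ) (Tstar p lam Prec Ω β : ℝ)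
    (hp : 0 < p) (hp1 : p < 1) (hT : 0 < Tstar) (hlam : 0 ≤ lam)
    (hφrange : ∀ u, 0 ≤ φ u ∧ φ u ≤ 1)
    (hβ : β = φ Tstar)
    (hφtail : ∀ u, Tstar ≤ u → φ u = β)
    (hfconst : ∀ u ∈ Icc (0:ℝ) Tstar, f u = lam * (1 - p) / p)
    (hfpos : ∀ u, 0 ≤ f u)
    (hfint : IntegrableOn f (Ioi 0))
    (hfmass : (∫ u in Ioi (0:ℝ), f u) = 1)
    (hΩ : Ω = ∫ u in (0:ℝ)..Tstar, φ u)
    (hφfint : IntegrableOn (fun u => φ u * f u) (Ioi 0))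
    (hPrec : Prec = p * ∫ u in Ioi (0:ℝ), φ u * f u) :
    Prec = (Ω - β * Tstar) * lam * (1 - p) + p * β := by
  set c : ℝ := lam * (1 - p) / p with hc
  have hsplit : Ioc (0:ℝ) Tstar ∪ Ioi Tstar = Ioi (0:ℝ) :=
    Ioc_union_Ioi_eq_Ioi hT.le
  have hdisj : Disjoint (Ioc (0:ℝ) Tstar) (Ioi Tstar) := by
    simp [Set.disjoint_left]
  -- decompositions of integrals
  have hfint1 : IntegrableOn f (Ioc (0:ℝ) Tstar) :=
    hfint.mono_set (by rw [← hsplit]; exact subset_union_left)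
  have hfint2 : IntegrableOn f (Ioi Tstar) :=
    hfint.mono_set (by rw [← hsplit]; exact subset_union_right)
  have hφfint1 : IntegrableOn (fun u => φ u * f u) (Ioc (0:ℝ) Tstar) :=
    hφfint.mono_set (by rw [← hsplit]; exact subset_union_left)
  have hφfint2 : IntegrableOn (fun u => φ u * f u) (Ioi Tstar) :=
    hφfint.mono_set (by rw [← hsplit]; exact subset_union_right)
  have hmass : (∫ u in Ioc (0:ℝ) Tstar, f u) + (∫ u in Ioi Tstar, f u) = 1 := by
    rw [← setIntegral_union hdisj measurableSet_Ioi hfint1 hfint2, hsplit, hfmass]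
  have hIoc_f : (∫ u in Ioc (0:ℝ) Tstar, f u) = c * Tstar := by
    rw [setIntegral_congr_fun measurableSet_Ioc
      (fun u hu => hfconst u (Ioc_subset_Icc_self hu))]
    simp [Real.volume_Ioc, hT.le, mul_comm]
  have hIoi_f : (∫ u in Ioi Tstar, f u) = 1 - c * Tstar := by
    rw [hIoc_f] at hmass; linarith
  have hI1 : (∫ u in Ioc (0:ℝ) Tstar, φ u * f u) = c * Ω := by
    rw [setIntegral_congr_fun measurableSet_Ioc
      (fun u hu => by rw [hfconst u (Ioc_subset_Icc_self hu)]),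
      integral_mul_const, hΩ, intervalIntegral.integral_of_le hT.le]
    ring
  have hI2 : (∫ u in Ioi Tstar, φ u * f u) = β * (1 - c * Tstar) := by
    rw [setIntegral_congr_fun measurableSet_Ioi
      (fun u hu => by rw [hφtail u (le_of_lt hu)]),
      integral_const_mul, hIoi_f]
  have htotal : (∫ u in Ioi (0:ℝ), φ u * f u) = c * Ω + β * (1 - c * Tstar) := by
    rw [← hsplit, setIntegral_union hdisj measurableSet_Ioi hφfint1 hφfint2, hI1, hI2]
  have hpc : p * c = lam * (1 - p) := by
    rw [hc]; field_simp
  rw [hPrec, htotal]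
  linear_combination (Ω - β * Tstar) * hpc
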